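/- arXiv:2111.08423 — 2 statements merged into one kernel-verified Lean document; each statement's English description precedes it below -/
import Mathlib

section
/- Let y ≤ x and 0 ≤ s ≤ t, and let p_r denote the Gaussian heat kernel. Then ∫₀ˢ ∫_ℝ (P_{t−s+r} 1_{[y,x]}(z) − P_r 1_{[y,x]}(z))² dz dr = (1/2π) ∫_ℝ [(1 − e^{−s z²})/z²] (1 − e^{−(t−s) z²/2})² |1̂_{[y,x]}(z)|² dz. -/
open MeasureTheory Real Filter

noncomputable def heatKernel (t x : ℝ) : ℝ :=
  (1 / Real.sqrt (2 * Real.pi * t)) * Real.exp (-x ^ 2 / (2 * t))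

noncomputable def heatP (t : ℝ) (f : ℝ → ℝ) (x : ℝ) : ℝ :=
  if t = 0 then f x else ∫ y : ℝ, heatKernel t (x - y) * f y

noncomputable def scaled (N : ℝ) (f : ℝ → ℝ) (x : ℝ) : ℝ :=
  (1 / Real.sqrt N) * f (x / N)

lemma heatKernel_nonneg (c w : ℝ) : 0 ≤ heatKernel c w := by
  unfold heatKernel; positivity

lemma heatKernel_le {c : ℝ} (hc : 0 < c) (w : ℝ) :
    heatKernel c w ≤ 1 / Real.sqrt (2 * Real.pi * c) := by
  unfold heatKernel
  have h1 : Real.exp (-w ^ 2 / (2 * c)) ≤ 1 := by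
    rw [Real.exp_le_one_iff, neg_div]
    exact neg_nonpos.mpr (div_nonneg (sq_nonneg w) (by linarith))
  calc (1 / Real.sqrt (2 * Real.pi * c)) * Real.exp (-w ^ 2 / (2 * c))
      ≤ (1 / Real.sqrt (2 * Real.pi * c)) * 1 := mul_le_mul_of_nonneg_left h1 (by positivity)
    _ = 1 / Real.sqrt (2 * Real.pi * c) := mul_one _

lemma continuous_heatKernel (c : ℝ) : Continuous (heatKernel c) := by
  unfold heatKernel; fun_prop

lemma heatKernel_eq (c : ℝ) (hc : 0 < c) (w : ℝ) :
    heatKernel c w = (1 / Real.sqrt (2 * Real.pi * c)) * Real.exp (-(1/(2*c)) * w ^ 2) := by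
  unfold heatKernel; ring_nf

lemma integrable_heatKernel {c : ℝ} (hc : 0 < c) : Integrable (heatKernel c) := by
  have : Integrable (fun w : ℝ => (1 / Real.sqrt (2 * Real.pi * c)) * Real.exp (-(1/(2*c)) * w ^ 2)) :=
    (integrable_exp_neg_mul_sq (by positivity)).const_mul _
  exact this.congr (by filter_upwards with w using (heatKernel_eq c hc w).symm)

lemma integral_heatKernel {c : ℝ} (hc : 0 < c) : ∫ w, heatKernel c w = 1 := by
  have h1 : ∫ w, heatKernel c w
      = (1 / Real.sqrt (2 * Real.pi * c)) * ∫ w : ℝ, Real.exp (-(1/(2*c)) * w ^ 2) := by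
    rw [← MeasureTheory.integral_const_mul]
    exact integral_congr_ae (by filter_upwards with w using heatKernel_eq c hc w)
  rw [h1, integral_gaussian]
  have : Real.pi / (1/(2*c)) = 2 * Real.pi * c := by field_simp
  rw [this]
  have h2 : Real.sqrt (2 * Real.pi * c) ≠ 0 := by positivity
  field_simp

lemma exp_sq_arg (a b u v z : ℝ) (ha : 0 < a) (hb : 0 < b) :
    -(z-u) ^ 2 / (2*a) + -(z-v) ^ 2 / (2*b)
      = -((a+b)/(2*a*b)) * (z - (b*u+a*v)/(a+b)) ^ 2 + -(u-v) ^ 2 / (2*(a+b)) := by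
  have ha' : a ≠ 0 := ne_of_gt ha
  have hb' : b ≠ 0 := ne_of_gt hb
  have hab : a + b ≠ 0 := by positivity
  field_simp
  ring

lemma heatKernel_conv {a b : ℝ} (ha : 0 < a) (hb : 0 < b) (u v : ℝ) :
    ∫ z, heatKernel a (z - u) * heatKernel b (z - v) = heatKernel (a+b) (u - v) := by
  set α := (a+b)/(2*a*b) with hα
  have hαpos : 0 < α := by positivity
  set m := (b*u+a*v)/(a+b) with hm
  have key : ∀ z, heatKernel a (z - u) * heatKernel b (z - v)
      = ((1 / Real.sqrt (2 * Real.pi * a)) * (1 / Real.sqrt (2 * Real.pi * b))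
          * Real.exp (-(u-v) ^ 2 / (2*(a+b)))) * Real.exp (-α * (z - m) ^ 2) := by
    intro z
    unfold heatKernel
    rw [mul_mul_mul_comm, ← Real.exp_add, exp_sq_arg a b u v z ha hb, Real.exp_add]
    ring
  rw [integral_congr_ae (Eventually.of_forall key), MeasureTheory.integral_const_mul]
  have hshift : ∫ z : ℝ, Real.exp (-α * (z - m) ^ 2) = ∫ z : ℝ, Real.exp (-α * z ^ 2) :=
    integral_sub_right_eq_self (fun z => Real.exp (-α * z ^ 2)) m
  rw [hshift, integral_gaussian]
  unfold heatKernel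
  have hsq : Real.sqrt (Real.pi / α) = Real.sqrt (2*Real.pi*a) * Real.sqrt (2*Real.pi*b)
      / Real.sqrt (2*Real.pi*(a+b)) := by
    rw [← Real.sqrt_mul (by positivity), ← Real.sqrt_div (by positivity)]
    congr 1
    rw [hα]
    field_simp
  rw [hsq]
  have h1 : Real.sqrt (2*Real.pi*a) ≠ 0 := by positivity
  have h2 : Real.sqrt (2*Real.pi*b) ≠ 0 := by positivity
  have h3 : Real.sqrt (2*Real.pi*(a+b)) ≠ 0 := by positivity
  field_simp

lemma gaussian_cos_integral {c : ℝ} (hc : 0 < c) (w : ℝ) :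
    ∫ z : ℝ, Real.exp (-c * z ^ 2 / 2) * Real.cos (z * w)
      = 2 * Real.pi * heatKernel c w := by
  have hc2 : (0:ℝ) < c / 2 := by linarith
  have hb : (0:ℝ) < ((c:ℂ)/2).re := by
    simpa using hc2
  have h := fourierIntegral_gaussian hb (w : ℂ)
  have hInt : Integrable (fun x : ℝ =>
      Complex.exp (Complex.I * w * x) * Complex.exp (-((c:ℂ)/2) * x ^ 2)) := by
    apply Integrable.mono' ((integrable_exp_neg_mul_sq hc2).const_mul 1)
    · apply Continuous.aestronglyMeasurable
      fun_prop
    · filter_upwards with z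
      rw [norm_mul]
      have h1 : ‖Complex.exp (Complex.I * w * z)‖ = 1 := by
        rw [show Complex.I * (w:ℂ) * (z:ℂ) = ((w * z : ℝ) : ℂ) * Complex.I by push_cast; ring]
        exact Complex.norm_exp_ofReal_mul_I _
      have h2 : ‖Complex.exp (-((c:ℂ)/2) * z ^ 2)‖ = Real.exp (-(c/2) * z ^ 2) := by
        rw [show -((c:ℂ)/2) * (z:ℂ) ^ 2 = ((-(c/2) * z ^ 2 : ℝ) : ℂ) by push_cast; ring,
          ← Complex.ofReal_exp]
        rw [Complex.norm_real, Real.norm_of_nonneg (Real.exp_pos _).le]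
      rw [h1, h2, one_mul]
  have hre : (∫ x : ℝ, (Complex.exp (Complex.I * w * x) * Complex.exp (-((c:ℂ)/2) * x ^ 2)).re)
      = (((Real.pi:ℂ)/((c:ℂ)/2)) ^ ((1:ℂ)/2) * Complex.exp (-(w:ℂ) ^ 2 / (4 * ((c:ℂ)/2)))).re := by
    rw [← h]; exact integral_re hInt
  have hLHS : ∫ x : ℝ, (Complex.exp (Complex.I * w * x) * Complex.exp (-((c:ℂ)/2) * x ^ 2)).re
      = ∫ z : ℝ, Real.exp (-c * z ^ 2 / 2) * Real.cos (z * w) := by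
    apply integral_congr_ae
    filter_upwards with z
    rw [show -((c:ℂ)/2) * (z:ℂ) ^ 2 = ((-c * z ^ 2 / 2 : ℝ) : ℂ) by push_cast; ring,
      ← Complex.ofReal_exp,
      show Complex.I * (w:ℂ) * (z:ℂ) = ((z * w : ℝ) : ℂ) * Complex.I by push_cast; ring]
    rw [mul_comm, Complex.re_ofReal_mul, Complex.exp_ofReal_mul_I_re, mul_comm]
  have hRHS : ((Real.pi : ℂ)/((c:ℂ)/2)) ^ ((1:ℂ)/2) * Complex.exp (-(w:ℂ) ^ 2 / (4 * ((c:ℂ)/2)))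
      = ((Real.sqrt (2 * Real.pi / c) * Real.exp (-w ^ 2 / (2 * c)) : ℝ) : ℂ) := by
    have e1 : ((Real.pi : ℂ)/((c:ℂ)/2)) = ((2 * Real.pi / c : ℝ) : ℂ) := by
      push_cast
      field_simp
    have e2 : (-(w:ℂ) ^ 2 / (4 * ((c:ℂ)/2))) = ((-w ^ 2 / (2 * c) : ℝ) : ℂ) := by
      push_cast
      have : (c:ℂ) ≠ 0 := by exact_mod_cast ne_of_gt hc
      field_simp
      ring
    rw [e1, e2, ← Complex.ofReal_exp, Complex.ofReal_mul, Real.sqrt_eq_rpow,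
      Complex.ofReal_cpow (by positivity)]
    norm_num
  rw [hLHS, hRHS] at hre
  rw [hre, Complex.ofReal_re]
  unfold heatKernel
  have hs : Real.sqrt (2 * Real.pi / c) = 2 * Real.pi / Real.sqrt (2 * Real.pi * c) := by
    rw [show 2 * Real.pi / c = (2 * Real.pi) ^ 2 / (2 * Real.pi * c) by
        field_simp,
      Real.sqrt_div (by positivity), Real.sqrt_sq (by positivity)]
  rw [hs]
  have h3 : Real.sqrt (2 * Real.pi * c) ≠ 0 := by positivity
  field_simp

noncomputable def ft (f : ℝ → ℝ) (z : ℝ) : ℂ :=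
  ∫ y : ℝ, (f y : ℂ) * Complex.exp (Complex.I * z * y)

section Setup

variable (y x : ℝ)

local notation "ν" => volume.restrict (Set.Icc y x)
local notation "ff" => Set.indicator (Set.Icc y x) (1 : ℝ → ℝ)

noncomputable def Qf (c z : ℝ) : ℝ := ∫ u in Set.Icc y x, heatKernel c (z - u)

noncomputable def Jf (c : ℝ) : ℝ :=
    ∫ p : ℝ × ℝ, heatKernel c (p.1 - p.2)
      ∂((volume.restrict (Set.Icc y x)).prod (volume.restrict (Set.Icc y x)))

lemma finite_nu : IsFiniteMeasure (volume.restrict (Set.Icc y x)) :=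
  ⟨by rw [Measure.restrict_apply_univ]; exact measure_Icc_lt_top⟩

lemma heatKernel_comm (c u v : ℝ) : heatKernel c (u - v) = heatKernel c (v - u) := by
  unfold heatKernel; ring_nf

lemma integrable_heatKernel_sub {c : ℝ} (hc : 0 < c) (z : ℝ) :
    Integrable (fun u : ℝ => heatKernel c (z - u)) := by
  have h1 : (fun u : ℝ => heatKernel c (z - u)) = fun u : ℝ => heatKernel c (u - z) := by
    funext u; exact heatKernel_comm c z u
  rw [h1]
  exact (integrable_heatKernel hc).comp_sub_right z

lemma integral_heatKernel_sub {c : ℝ} (hc : 0 < c) (z : ℝ) :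
    ∫ u : ℝ, heatKernel c (z - u) = 1 := by
  have h1 : ∀ u : ℝ, heatKernel c (z - u) = heatKernel c (u - z) :=
    fun u => heatKernel_comm c z u
  rw [integral_congr_ae (Eventually.of_forall h1),
    integral_sub_right_eq_self (heatKernel c) z]
  exact integral_heatKernel hc

lemma Qf_nonneg (c z : ℝ) : 0 ≤ Qf y x c z :=
  integral_nonneg fun u => heatKernel_nonneg c (z - u)

lemma Qf_le_one {c : ℝ} (hc : 0 < c) (z : ℝ) : Qf y x c z ≤ 1 := by
  have h := setIntegral_le_integral (μ := volume) (s := Set.Icc y x)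
    (integrable_heatKernel_sub hc z)
    (Eventually.of_forall fun u => heatKernel_nonneg c (z - u))
  calc Qf y x c z ≤ ∫ u : ℝ, heatKernel c (z - u) := h
    _ = 1 := integral_heatKernel_sub hc z

lemma heatP_eq {c : ℝ} (hc : 0 < c) (z : ℝ) :
    heatP c ff z = Qf y x c z := by
  unfold heatP
  rw [if_neg (ne_of_gt hc)]
  unfold Qf
  rw [← MeasureTheory.integral_indicator measurableSet_Icc]
  congr 1
  funext u
  by_cases hu : u ∈ Set.Icc y x
  · simp [Set.indicator_of_mem hu]
  · simp [Set.indicator_of_notMem hu]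

lemma Qf_integrable {c : ℝ} (hc : 0 < c) : Integrable (Qf y x c) := by
  haveI := finite_nu y x
  have hF : Integrable (fun q : ℝ × ℝ => heatKernel c (q.1 - q.2))
      (volume.prod (volume.restrict (Set.Icc y x))) := by
    have hm : AEStronglyMeasurable (fun q : ℝ × ℝ => heatKernel c (q.1 - q.2))
        (volume.prod (volume.restrict (Set.Icc y x))) :=
      ((continuous_heatKernel c).comp (continuous_fst.sub continuous_snd)).aestronglyMeasurable
    rw [integrable_prod_iff' hm]
    constructor
    · filter_upwards with u
      exact (integrable_heatKernel hc).comp_sub_right u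
    · apply (integrable_const (1:ℝ)).congr
      filter_upwards with u
      have h1 : ∫ z : ℝ, ‖heatKernel c (z - u)‖ = 1 := by
        simp_rw [Real.norm_of_nonneg (heatKernel_nonneg c _)]
        rw [integral_sub_right_eq_self (heatKernel c) u, integral_heatKernel hc]
      exact h1.symm
  exact hF.integral_prod_left

lemma QQ_integrable {a b : ℝ} (ha : 0 < a) (hb : 0 < b) :
    Integrable (fun z => Qf y x a z * Qf y x b z) := by
  apply Integrable.mono' (Qf_integrable y x ha)
    ((Qf_integrable y x ha).aestronglyMeasurable.mul
      (Qf_integrable y x hb).aestronglyMeasurable)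
  filter_upwards with z
  simp only [Pi.mul_apply]
  rw [Real.norm_of_nonneg (mul_nonneg (Qf_nonneg y x a z) (Qf_nonneg y x b z))]
  calc Qf y x a z * Qf y x b z ≤ Qf y x a z * 1 :=
        mul_le_mul_of_nonneg_left (Qf_le_one y x hb z) (Qf_nonneg y x a z)
    _ = Qf y x a z := mul_one _

lemma QQ_prod_eq {a b : ℝ} (z : ℝ) :
    Qf y x a z * Qf y x b z
      = ∫ p : ℝ × ℝ, heatKernel a (z - p.1) * heatKernel b (z - p.2)
          ∂((volume.restrict (Set.Icc y x)).prod (volume.restrict (Set.Icc y x))) :=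
  (integral_prod_mul (fun u => heatKernel a (z - u)) (fun v => heatKernel b (z - v))).symm

lemma QQ_uncurry_integrable {a b : ℝ} (ha : 0 < a) (hb : 0 < b) :
    Integrable (fun q : ℝ × (ℝ × ℝ) => heatKernel a (q.1 - q.2.1) * heatKernel b (q.1 - q.2.2))
      (volume.prod ((volume.restrict (Set.Icc y x)).prod (volume.restrict (Set.Icc y x)))) := by
  haveI := finite_nu y x
  have hm : AEStronglyMeasurable
      (fun q : ℝ × (ℝ × ℝ) => heatKernel a (q.1 - q.2.1) * heatKernel b (q.1 - q.2.2))
      (volume.prod ((volume.restrict (Set.Icc y x)).prod (volume.restrict (Set.Icc y x)))) := by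
    apply Continuous.aestronglyMeasurable
    exact ((continuous_heatKernel a).comp
        (continuous_fst.sub (continuous_snd.fst))).mul
      ((continuous_heatKernel b).comp (continuous_fst.sub (continuous_snd.snd)))
  rw [integrable_prod_iff hm]
  constructor
  · filter_upwards with z
    apply Integrable.mono'
      (integrable_const ((1 / Real.sqrt (2 * Real.pi * a)) * (1 / Real.sqrt (2 * Real.pi * b))))
    · apply Continuous.aestronglyMeasurable
      exact ((continuous_heatKernel a).comp
          (continuous_const.sub continuous_fst)).mul
        ((continuous_heatKernel b).comp (continuous_const.sub continuous_snd))
    · filter_upwards with p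
      rw [Real.norm_of_nonneg (mul_nonneg (heatKernel_nonneg _ _) (heatKernel_nonneg _ _))]
      exact mul_le_mul (heatKernel_le ha _) (heatKernel_le hb _)
        (heatKernel_nonneg _ _) (by positivity)
  · apply (QQ_integrable y x ha hb).congr
    filter_upwards with z
    rw [QQ_prod_eq]
    apply integral_congr_ae
    filter_upwards with p
    rw [Real.norm_of_nonneg (mul_nonneg (heatKernel_nonneg _ _) (heatKernel_nonneg _ _))]

lemma int_QQ {a b : ℝ} (ha : 0 < a) (hb : 0 < b) :
    ∫ z, Qf y x a z * Qf y x b z = Jf y x (a + b) := by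
  rw [integral_congr_ae (Eventually.of_forall fun z => QQ_prod_eq y x z)]
  rw [integral_integral_swap (QQ_uncurry_integrable y x ha hb)]
  unfold Jf
  apply integral_congr_ae
  filter_upwards with p
  exact heatKernel_conv ha hb p.1 p.2

lemma ft_eq (z : ℝ) :
    ft ff z = ∫ u in Set.Icc y x, Complex.exp (Complex.I * z * u) := by
  unfold ft
  rw [← MeasureTheory.integral_indicator measurableSet_Icc]
  congr 1
  funext u
  by_cases hu : u ∈ Set.Icc y x
  · simp [Set.indicator_of_mem hu]
  · simp [Set.indicator_of_notMem hu]

lemma cexp_integrable (z : ℝ) :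
    Integrable (fun u : ℝ => Complex.exp (Complex.I * z * u)) (volume.restrict (Set.Icc y x)) := by
  haveI := finite_nu y x
  apply Integrable.mono' (integrable_const (1:ℝ))
  · exact (Continuous.aestronglyMeasurable (by fun_prop))
  · filter_upwards with u
    rw [show Complex.I * (z:ℂ) * (u:ℂ) = ((z * u : ℝ) : ℂ) * Complex.I by push_cast; ring]
    rw [Complex.norm_exp_ofReal_mul_I]

lemma ft_re (z : ℝ) :
    (ft ff z).re = ∫ u in Set.Icc y x, Real.cos (z * u) := by
  rw [ft_eq]
  have h1 : (∫ u in Set.Icc y x, Complex.exp (Complex.I * z * u)).re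
      = ∫ u in Set.Icc y x, (Complex.exp (Complex.I * z * u)).re :=
    (integral_re (cexp_integrable y x z)).symm
  rw [h1]
  apply integral_congr_ae
  filter_upwards with u
  rw [show Complex.I * (z:ℂ) * (u:ℂ) = ((z * u : ℝ) : ℂ) * Complex.I by push_cast; ring]
  exact Complex.exp_ofReal_mul_I_re _

lemma ft_im (z : ℝ) :
    (ft ff z).im = ∫ u in Set.Icc y x, Real.sin (z * u) := by
  rw [ft_eq]
  have h1 : (∫ u in Set.Icc y x, Complex.exp (Complex.I * z * u)).im
      = ∫ u in Set.Icc y x, (Complex.exp (Complex.I * z * u)).im :=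
    (integral_im (cexp_integrable y x z)).symm
  rw [h1]
  apply integral_congr_ae
  filter_upwards with u
  rw [show Complex.I * (z:ℂ) * (u:ℂ) = ((z * u : ℝ) : ℂ) * Complex.I by push_cast; ring]
  exact Complex.exp_ofReal_mul_I_im _

lemma trig_integrable (g : ℝ → ℝ) (hg : Continuous g) (hb : ∀ w, |g w| ≤ 1) (z : ℝ) :
    Integrable (fun u : ℝ => g (z * u)) (volume.restrict (Set.Icc y x)) := by
  haveI := finite_nu y x
  apply Integrable.mono' (integrable_const (1:ℝ))
  · exact (Continuous.aestronglyMeasurable (by fun_prop))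
  · filter_upwards with u
    exact hb (z * u)

lemma absft_eq (z : ℝ) :
    (‖ft ff z‖) ^ 2
      = ∫ p : ℝ × ℝ, Real.cos (z * (p.1 - p.2))
          ∂((volume.restrict (Set.Icc y x)).prod (volume.restrict (Set.Icc y x))) := by
  haveI := finite_nu y x
  rw [Complex.sq_norm, Complex.normSq_apply, ft_re, ft_im]
  rw [← integral_prod_mul (fun u => Real.cos (z * u)) (fun v => Real.cos (z * v)),
    ← integral_prod_mul (fun u => Real.sin (z * u)) (fun v => Real.sin (z * v))]
  rw [← integral_add]
  · apply integral_congr_ae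
    filter_upwards with p
    rw [mul_sub, Real.cos_sub]
  · exact ((trig_integrable y x Real.cos Real.continuous_cos
        (fun w => Real.abs_cos_le_one w) z).mul_prod
      (trig_integrable y x Real.cos Real.continuous_cos (fun w => Real.abs_cos_le_one w) z))
  · exact ((trig_integrable y x Real.sin Real.continuous_sin
        (fun w => Real.abs_sin_le_one w) z).mul_prod
      (trig_integrable y x Real.sin Real.continuous_sin (fun w => Real.abs_sin_le_one w) z))

lemma ft_stronglyMeasurable : StronglyMeasurable (ft ff) := by
  have hm : StronglyMeasurable
      (fun q : ℝ × ℝ => ((Set.indicator (Set.Icc y x) (1 : ℝ → ℝ) q.2 : ℝ) : ℂ)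
        * Complex.exp (Complex.I * q.1 * q.2)) := by
    apply Measurable.stronglyMeasurable
    apply Measurable.mul
    · exact Complex.measurable_ofReal.comp
        ((measurable_const.indicator measurableSet_Icc).comp measurable_snd)
    · apply Continuous.measurable
      fun_prop
  exact hm.integral_prod_right'

lemma ft_bound (hyx : y ≤ x) (z : ℝ) : ‖ft ff z‖ ≤ x - y := by
  haveI := finite_nu y x
  rw [ft_eq]
  have h := norm_integral_le_of_norm_le_const
    (μ := volume.restrict (Set.Icc y x)) (C := 1)
    (f := fun u : ℝ => Complex.exp (Complex.I * z * u)) ?_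
  · calc ‖∫ u in Set.Icc y x, Complex.exp (Complex.I * z * u)‖
        = ‖∫ u in Set.Icc y x, Complex.exp (Complex.I * z * u)‖ := rfl
      _ ≤ 1 * ((volume.restrict (Set.Icc y x)) Set.univ).toReal := h
      _ = x - y := by
          rw [one_mul, Measure.restrict_apply_univ, Real.volume_Icc,
            ENNReal.toReal_ofReal (sub_nonneg.mpr hyx)]
  · filter_upwards with u
    rw [show Complex.I * (z:ℂ) * (u:ℂ) = ((z * u : ℝ) : ℂ) * Complex.I by push_cast; ring]
    rw [Complex.norm_exp_ofReal_mul_I]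

lemma exp_absft_integrable {c : ℝ} (hc : 0 < c) (hyx : y ≤ x) :
    Integrable (fun z => Real.exp (-c * z ^ 2 / 2) * (‖ft ff z‖) ^ 2) := by
  apply Integrable.mono'
    (((integrable_exp_neg_mul_sq (show (0:ℝ) < c/2 by linarith)).const_mul ((x - y) ^ 2)))
  · apply AEStronglyMeasurable.mul
    · exact (Continuous.aestronglyMeasurable (by fun_prop))
    · apply Measurable.aestronglyMeasurable
      exact ((continuous_norm.measurable.comp (ft_stronglyMeasurable y x).measurable).pow_const 2)
  · filter_upwards with z
    rw [Real.norm_of_nonneg (mul_nonneg (Real.exp_pos _).le (by positivity))]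
    have h1 : (‖ft ff z‖) ^ 2 ≤ (x - y) ^ 2 := by
      apply pow_le_pow_left₀ (norm_nonneg _) (ft_bound y x hyx z)
    calc Real.exp (-c * z ^ 2 / 2) * (‖ft ff z‖) ^ 2
        ≤ Real.exp (-c * z ^ 2 / 2) * (x - y) ^ 2 :=
          mul_le_mul_of_nonneg_left h1 (Real.exp_pos _).le
      _ = (x - y) ^ 2 * Real.exp (-(c/2) * z ^ 2) := by
          rw [mul_comm]; congr 1; ring_nf

lemma exp_cos_uncurry_integrable {c : ℝ} (hc : 0 < c) :
    Integrable (fun q : ℝ × (ℝ × ℝ) => Real.exp (-c * q.1 ^ 2 / 2) * Real.cos (q.1 * (q.2.1 - q.2.2)))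
      (volume.prod ((volume.restrict (Set.Icc y x)).prod (volume.restrict (Set.Icc y x)))) := by
  haveI := finite_nu y x
  have hc2 : (0:ℝ) < c / 2 := by linarith
  have hcont : Continuous (fun q : ℝ × (ℝ × ℝ) =>
      Real.exp (-c * q.1 ^ 2 / 2) * Real.cos (q.1 * (q.2.1 - q.2.2))) := by fun_prop
  rw [integrable_prod_iff hcont.aestronglyMeasurable]
  set μ2 := (volume.restrict (Set.Icc y x)).prod (volume.restrict (Set.Icc y x))
  haveI : IsFiniteMeasure μ2 := by infer_instance
  constructor
  · filter_upwards with z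
    apply Integrable.mono' (integrable_const (Real.exp (-c * z ^ 2 / 2)))
    · exact Continuous.aestronglyMeasurable (by fun_prop)
    · filter_upwards with p
      rw [norm_mul, Real.norm_of_nonneg (Real.exp_pos _).le]
      calc Real.exp (-c * z ^ 2 / 2) * ‖Real.cos (z * (p.1 - p.2))‖
          ≤ Real.exp (-c * z ^ 2 / 2) * 1 := by
            apply mul_le_mul_of_nonneg_left _ (Real.exp_pos _).le
            rw [Real.norm_eq_abs]; exact Real.abs_cos_le_one _
        _ = Real.exp (-c * z ^ 2 / 2) := mul_one _
  · set M := (μ2 Set.univ).toReal with hM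
    have hInt : Integrable (fun z : ℝ => Real.exp (-c * z ^ 2 / 2) * M) := by
      apply ((integrable_exp_neg_mul_sq hc2).mul_const M).congr
      filter_upwards with z
      congr 1
      ring_nf
    apply Integrable.mono' hInt
    · apply StronglyMeasurable.aestronglyMeasurable
      exact (hcont.norm.stronglyMeasurable).integral_prod_right'
    · filter_upwards with z
      have h := norm_integral_le_of_norm_le_const (μ := μ2)
        (C := Real.exp (-c * z ^ 2 / 2))
        (f := fun p : ℝ × ℝ => ‖Real.exp (-c * z ^ 2 / 2) * Real.cos (z * (p.1 - p.2))‖) ?_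
      · exact le_trans (le_of_eq rfl) (by
          refine le_trans ?_ (le_of_eq rfl)
          exact h)
      · filter_upwards with p
        rw [norm_norm, norm_mul, Real.norm_of_nonneg (Real.exp_pos _).le]
        calc Real.exp (-c * z ^ 2 / 2) * ‖Real.cos (z * (p.1 - p.2))‖
            ≤ Real.exp (-c * z ^ 2 / 2) * 1 := by
              apply mul_le_mul_of_nonneg_left _ (Real.exp_pos _).le
              rw [Real.norm_eq_abs]; exact Real.abs_cos_le_one _
          _ = Real.exp (-c * z ^ 2 / 2) := mul_one _

lemma int_exp_absft {c : ℝ} (hc : 0 < c) :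
    ∫ z : ℝ, Real.exp (-c * z ^ 2 / 2) * (‖ft ff z‖) ^ 2
      = 2 * Real.pi * Jf y x c := by
  haveI := finite_nu y x
  have h1 : ∀ z : ℝ, Real.exp (-c * z ^ 2 / 2) * (‖ft ff z‖) ^ 2
      = ∫ p : ℝ × ℝ, Real.exp (-c * z ^ 2 / 2) * Real.cos (z * (p.1 - p.2))
          ∂((volume.restrict (Set.Icc y x)).prod (volume.restrict (Set.Icc y x))) := by
    intro z
    rw [absft_eq, ← MeasureTheory.integral_const_mul]
  rw [integral_congr_ae (Eventually.of_forall h1)]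
  rw [integral_integral_swap (exp_cos_uncurry_integrable y x hc)]
  have h2 : ∀ p : ℝ × ℝ, (∫ z : ℝ, Real.exp (-c * z ^ 2 / 2) * Real.cos (z * (p.1 - p.2)))
      = 2 * Real.pi * heatKernel c (p.1 - p.2) := fun p => gaussian_cos_integral hc (p.1 - p.2)
  rw [integral_congr_ae (Eventually.of_forall h2), MeasureTheory.integral_const_mul]
  rfl

lemma stepE2 {a b : ℝ} (ha : 0 < a) (hb : 0 < b) :
    ∫ z : ℝ, (Qf y x a z - Qf y x b z) ^ 2
      = Jf y x (a + a) - 2 * Jf y x (a + b) + Jf y x (b + b) := by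
  have hpt : ∀ z : ℝ, (Qf y x a z - Qf y x b z) ^ 2
      = Qf y x a z * Qf y x a z - 2 * (Qf y x a z * Qf y x b z) + Qf y x b z * Qf y x b z := by
    intro z; ring
  rw [integral_congr_ae (Eventually.of_forall hpt)]
  have hI1 : Integrable (fun z : ℝ => Qf y x a z * Qf y x a z
      - 2 * (Qf y x a z * Qf y x b z)) :=
    (QQ_integrable y x ha ha).sub ((QQ_integrable y x ha hb).const_mul 2)
  have hI2 : Integrable (fun z : ℝ => 2 * (Qf y x a z * Qf y x b z)) :=
    (QQ_integrable y x ha hb).const_mul 2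
  rw [integral_add hI1 (QQ_integrable y x hb hb),
    integral_sub (QQ_integrable y x ha ha) hI2,
    MeasureTheory.integral_const_mul,
    int_QQ y x ha ha, int_QQ y x ha hb, int_QQ y x hb hb]

lemma stepE {a b : ℝ} (ha : 0 < a) (hb : 0 < b) (hyx : y ≤ x) :
    ∫ z : ℝ, (Qf y x a z - Qf y x b z) ^ 2
      = (1 / (2 * Real.pi)) * ∫ z : ℝ,
          (Real.exp (-a * z ^ 2 / 2) - Real.exp (-b * z ^ 2 / 2)) ^ 2
            * (‖ft ff z‖) ^ 2 := by
  have hpt : ∀ z : ℝ,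
      (Real.exp (-a * z ^ 2 / 2) - Real.exp (-b * z ^ 2 / 2)) ^ 2 * (‖ft ff z‖) ^ 2
      = Real.exp (-(a + a) * z ^ 2 / 2) * (‖ft ff z‖) ^ 2
        - 2 * (Real.exp (-(a + b) * z ^ 2 / 2) * (‖ft ff z‖) ^ 2)
        + Real.exp (-(b + b) * z ^ 2 / 2) * (‖ft ff z‖) ^ 2 := by
    intro z
    have e1 : Real.exp (-a * z ^ 2 / 2) * Real.exp (-a * z ^ 2 / 2)
        = Real.exp (-(a + a) * z ^ 2 / 2) := by rw [← Real.exp_add]; ring_nf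
    have e2 : Real.exp (-a * z ^ 2 / 2) * Real.exp (-b * z ^ 2 / 2)
        = Real.exp (-(a + b) * z ^ 2 / 2) := by rw [← Real.exp_add]; ring_nf
    have e3 : Real.exp (-b * z ^ 2 / 2) * Real.exp (-b * z ^ 2 / 2)
        = Real.exp (-(b + b) * z ^ 2 / 2) := by rw [← Real.exp_add]; ring_nf
    calc (Real.exp (-a * z ^ 2 / 2) - Real.exp (-b * z ^ 2 / 2)) ^ 2 * (‖ft ff z‖) ^ 2
        = (Real.exp (-a * z ^ 2 / 2) * Real.exp (-a * z ^ 2 / 2)) * (‖ft ff z‖) ^ 2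
          - 2 * ((Real.exp (-a * z ^ 2 / 2) * Real.exp (-b * z ^ 2 / 2)) * (‖ft ff z‖) ^ 2)
          + (Real.exp (-b * z ^ 2 / 2) * Real.exp (-b * z ^ 2 / 2)) * (‖ft ff z‖) ^ 2 := by
          ring
      _ = _ := by rw [e1, e2, e3]
  have haa : (0:ℝ) < a + a := by linarith
  have hab : (0:ℝ) < a + b := by linarith
  have hbb : (0:ℝ) < b + b := by linarith
  rw [stepE2 y x ha hb]
  rw [integral_congr_ae (Eventually.of_forall hpt)]
  have hI1 : Integrable (fun z : ℝ => Real.exp (-(a + a) * z ^ 2 / 2) * (‖ft ff z‖) ^ 2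
      - 2 * (Real.exp (-(a + b) * z ^ 2 / 2) * (‖ft ff z‖) ^ 2)) :=
    (exp_absft_integrable y x haa hyx).sub ((exp_absft_integrable y x hab hyx).const_mul 2)
  have hI2 : Integrable (fun z : ℝ => 2 * (Real.exp (-(a + b) * z ^ 2 / 2)
      * (‖ft ff z‖) ^ 2)) :=
    (exp_absft_integrable y x hab hyx).const_mul 2
  rw [integral_add hI1 (exp_absft_integrable y x hbb hyx),
    integral_sub (exp_absft_integrable y x haa hyx) hI2,
    MeasureTheory.integral_const_mul,
    int_exp_absft y x haa, int_exp_absft y x hab, int_exp_absft y x hbb]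
  have hpi : Real.pi ≠ 0 := Real.pi_ne_zero
  field_simp

end Setup

lemma hcalc (s t : ℝ) (hs : 0 ≤ s) (hst : s ≤ t) (z : ℝ) :
    ∫ r in (0:ℝ)..s, (Real.exp (-(t - s + r) * z ^ 2 / 2) - Real.exp (-r * z ^ 2 / 2)) ^ 2
      = ((1 - Real.exp (-s * z ^ 2)) / z ^ 2) * (1 - Real.exp (-(t - s) * z ^ 2 / 2)) ^ 2 := by
  by_cases hz : z = 0
  · subst hz
    norm_num
  · have hz2 : z ^ 2 ≠ 0 := pow_ne_zero 2 hz
    have hpt : ∀ r : ℝ, (Real.exp (-(t - s + r) * z ^ 2 / 2) - Real.exp (-r * z ^ 2 / 2)) ^ 2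
        = (1 - Real.exp (-(t - s) * z ^ 2 / 2)) ^ 2 * Real.exp (r * -z ^ 2) := by
      intro r
      have e1 : Real.exp (-(t - s + r) * z ^ 2 / 2)
          = Real.exp (-(t - s) * z ^ 2 / 2) * Real.exp (-r * z ^ 2 / 2) := by
        rw [← Real.exp_add]; ring_nf
      have e2 : Real.exp (r * -z ^ 2)
          = Real.exp (-r * z ^ 2 / 2) * Real.exp (-r * z ^ 2 / 2) := by
        rw [← Real.exp_add]; ring_nf
      rw [e1, e2]; ring
    rw [intervalIntegral.integral_congr (fun r _ => hpt r),
      intervalIntegral.integral_const_mul,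
      intervalIntegral.integral_comp_mul_right Real.exp (neg_ne_zero.mpr hz2),
      zero_mul, integral_exp, smul_eq_mul, Real.exp_zero]
    have harg : s * -z ^ 2 = -s * z ^ 2 := by ring
    rw [harg]
    field_simp
    ring

theorem stmt6 (y x s t : ℝ) (hyx : y ≤ x) (hs : 0 ≤ s) (hst : s ≤ t) :
    (∫ r in (0:ℝ)..s, ∫ z : ℝ,
        (heatP (t - s + r) (Set.indicator (Set.Icc y x) 1) z
          - heatP r (Set.indicator (Set.Icc y x) 1) z) ^ 2)
      = (1 / (2 * Real.pi)) *
        ∫ z : ℝ, ((1 - Real.exp (-s * z ^ 2)) / z ^ 2) *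
          (1 - Real.exp (-(t - s) * z ^ 2 / 2)) ^ 2 *
          (‖ft (Set.indicator (Set.Icc y x) 1) z‖) ^ 2 := by
  set f0 : ℝ → ℝ := Set.indicator (Set.Icc y x) 1 with hf0
  set W : ℝ → ℝ → ℝ := fun r z =>
    (Real.exp (-(t - s + r) * z ^ 2 / 2) - Real.exp (-r * z ^ 2 / 2)) ^ 2
      * (‖ft f0 z‖) ^ 2 with hW
  set G : ℝ → ℝ := fun z => ((1 - Real.exp (-s * z ^ 2)) / z ^ 2) *
      (1 - Real.exp (-(t - s) * z ^ 2 / 2)) ^ 2 * (‖ft f0 z‖) ^ 2 with hG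
  rw [intervalIntegral.integral_of_le hs]
  have hEq : Set.EqOn (fun r => ∫ z : ℝ, (heatP (t - s + r) f0 z - heatP r f0 z) ^ 2)
      (fun r => (1 / (2 * Real.pi)) * ∫ z : ℝ, W r z) (Set.Ioc 0 s) := by
    intro r hr
    have hb : 0 < r := hr.1
    have ha : 0 < t - s + r := by linarith [hr.1]
    simp only
    have h1 : ∀ z : ℝ, (heatP (t - s + r) f0 z - heatP r f0 z) ^ 2
        = (Qf y x (t - s + r) z - Qf y x r z) ^ 2 := by
      intro z
      rw [hf0, heatP_eq y x ha, heatP_eq y x hb]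
    rw [integral_congr_ae (Eventually.of_forall h1), stepE y x ha hb hyx]
  rw [setIntegral_congr_fun measurableSet_Ioc hEq, MeasureTheory.integral_const_mul]
  congr 1
  -- measurability facts
  have hW_SM : StronglyMeasurable (fun q : ℝ × ℝ => W q.1 q.2) := by
    apply Measurable.stronglyMeasurable
    apply Measurable.mul
    · apply Continuous.measurable
      fun_prop
    · exact (continuous_norm.measurable.comp
        ((ft_stronglyMeasurable y x).measurable.comp measurable_snd)).pow_const 2
  have habs_meas : Measurable (fun z : ℝ => (‖ft f0 z‖) ^ 2 : ℝ → ℝ) :=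
    (continuous_norm.measurable.comp (ft_stronglyMeasurable y x).measurable).pow_const 2
  have hG_meas : AEStronglyMeasurable G := by
    apply Measurable.aestronglyMeasurable
    apply Measurable.mul
    apply Measurable.mul
    · exact (measurable_const.sub (by fun_prop : Measurable fun z : ℝ =>
        Real.exp (-s * z ^ 2))).div (by fun_prop)
    · exact (by fun_prop : Measurable fun z : ℝ => (1 - Real.exp (-(t - s) * z ^ 2 / 2)) ^ 2)
    · exact habs_meas
  have hW_nonneg : ∀ r z : ℝ, 0 ≤ W r z := fun r z =>
    mul_nonneg (sq_nonneg _) (sq_nonneg _)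
  have hG_nonneg : ∀ z : ℝ, 0 ≤ G z := by
    intro z
    apply mul_nonneg (mul_nonneg _ (sq_nonneg _)) (sq_nonneg _)
    apply div_nonneg _ (sq_nonneg z)
    rw [sub_nonneg, Real.exp_le_one_iff]
    nlinarith [sq_nonneg z]
  have hWr_int : ∀ r ∈ Set.Ioc (0:ℝ) s, Integrable (fun z => W r z) := by
    intro r hr
    apply Integrable.mono' ((integrable_exp_neg_mul_sq hr.1).const_mul ((x - y) ^ 2))
    · exact (hW_SM.comp_measurable (measurable_const.prodMk measurable_id)).aestronglyMeasurable
    · filter_upwards with z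
      rw [Real.norm_of_nonneg (hW_nonneg r z)]
      have h1 : Real.exp (-(t - s + r) * z ^ 2 / 2) ≤ Real.exp (-r * z ^ 2 / 2) := by
        apply Real.exp_le_exp.mpr
        nlinarith [sq_nonneg z]
      have h2 : (Real.exp (-(t - s + r) * z ^ 2 / 2) - Real.exp (-r * z ^ 2 / 2)) ^ 2
          ≤ Real.exp (-r * z ^ 2) := by
        have h3 : |Real.exp (-(t - s + r) * z ^ 2 / 2) - Real.exp (-r * z ^ 2 / 2)|
            ≤ Real.exp (-r * z ^ 2 / 2) := by
          rw [abs_sub_comm, abs_of_nonneg (sub_nonneg.mpr h1)]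
          have := Real.exp_pos (-(t - s + r) * z ^ 2 / 2)
          linarith
        calc (Real.exp (-(t - s + r) * z ^ 2 / 2) - Real.exp (-r * z ^ 2 / 2)) ^ 2
            = |Real.exp (-(t - s + r) * z ^ 2 / 2) - Real.exp (-r * z ^ 2 / 2)| ^ 2 := (sq_abs _).symm
          _ ≤ (Real.exp (-r * z ^ 2 / 2)) ^ 2 := by
              apply pow_le_pow_left₀ (abs_nonneg _) h3
          _ = Real.exp (-r * z ^ 2) := by
              rw [sq, ← Real.exp_add]; ring_nf
      have h4 : (‖ft f0 z‖) ^ 2 ≤ (x - y) ^ 2 :=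
        pow_le_pow_left₀ (norm_nonneg _) (ft_bound y x hyx z) 2
      calc W r z ≤ Real.exp (-r * z ^ 2) * (x - y) ^ 2 := by
            apply mul_le_mul h2 h4 (sq_nonneg _) (Real.exp_pos _).le
        _ = (x - y) ^ 2 * Real.exp (-r * z ^ 2) := mul_comm _ _
  have hWz_int : ∀ z : ℝ, IntegrableOn (fun r => W r z) (Set.Ioc 0 s) := by
    intro z
    apply Continuous.integrableOn_Ioc
    fun_prop
  -- main chain via lintegrals
  have hΦ_SM : StronglyMeasurable (fun r : ℝ => ∫ z : ℝ, W r z) :=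
    hW_SM.integral_prod_right'
  rw [integral_eq_lintegral_of_nonneg_ae
      (ae_of_all _ fun r => integral_nonneg fun z => hW_nonneg r z)
      hΦ_SM.aestronglyMeasurable.restrict,
    show (∫ z : ℝ, G z) = (∫⁻ z : ℝ, ENNReal.ofReal (G z)).toReal from
      integral_eq_lintegral_of_nonneg_ae (ae_of_all _ hG_nonneg) hG_meas]
  congr 1
  calc ∫⁻ r in Set.Ioc (0:ℝ) s, ENNReal.ofReal (∫ z : ℝ, W r z)
      = ∫⁻ r in Set.Ioc (0:ℝ) s, ∫⁻ z : ℝ, ENNReal.ofReal (W r z) := by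
        apply setLIntegral_congr_fun measurableSet_Ioc
        intro r hr
        exact ofReal_integral_eq_lintegral_ofReal (hWr_int r hr)
          (ae_of_all _ fun z => hW_nonneg r z)
    _ = ∫⁻ z : ℝ, ∫⁻ r in Set.Ioc (0:ℝ) s, ENNReal.ofReal (W r z) := by
        apply lintegral_lintegral_swap
        exact (ENNReal.measurable_ofReal.comp hW_SM.measurable).aemeasurable
    _ = ∫⁻ z : ℝ, ENNReal.ofReal (G z) := by
        apply lintegral_congr
        intro z
        rw [← ofReal_integral_eq_lintegral_ofReal (hWz_int z)
          (ae_of_all _ fun r => hW_nonneg r z)]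
        congr 1
        have h5 : ∫ r in Set.Ioc (0:ℝ) s, W r z
            = (∫ r in Set.Ioc (0:ℝ) s,
                (Real.exp (-(t - s + r) * z ^ 2 / 2) - Real.exp (-r * z ^ 2 / 2)) ^ 2)
              * (‖ft f0 z‖) ^ 2 := by
          rw [← integral_mul_const]
        rw [h5, ← intervalIntegral.integral_of_le hs, hcalc s t hs hst z]
end

section
/- Let y ≤ x, 0 ≤ s ≤ t with x − y ≤ (t−s)^{1/2}. Then ∫₀ˢ ∫_ℝ (P_{t−s+r} 1_{[y,x]}(z) − P_r 1_{[y,x]}(z))² dz dr ≤ (1/2)(t−s)(x−y), using the inequality 1 − e^{−a} ≤ a for a ≥ 0. -/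
open MeasureTheory Real Filter

lemma hk_nonneg (t x : ℝ) : 0 ≤ heatKernel t x := by
  unfold heatKernel
  positivity

lemma hk_eq (t : ℝ) (ht : 0 < t) (x : ℝ) :
    heatKernel t x = (1 / Real.sqrt (2 * Real.pi * t)) * Real.exp (-(1/(2*t)) * x ^ 2) := by
  unfold heatKernel
  congr 1
  ring

lemma hk_integrable {t : ℝ} (ht : 0 < t) : Integrable (heatKernel t) := by
  have h : Integrable fun x : ℝ => Real.exp (-(1/(2*t)) * x ^ 2) :=
    integrable_exp_neg_mul_sq (by positivity)
  have := h.const_mul (1 / Real.sqrt (2 * Real.pi * t))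
  refine this.congr ?_
  filter_upwards with x
  rw [hk_eq t ht]

lemma hk_integral {t : ℝ} (ht : 0 < t) : ∫ x : ℝ, heatKernel t x = 1 := by
  have h2t : (0:ℝ) < 1/(2*t) := by positivity
  have : ∫ x : ℝ, heatKernel t x
      = (1 / Real.sqrt (2 * Real.pi * t)) * ∫ x : ℝ, Real.exp (-(1/(2*t)) * x ^ 2) := by
    rw [← integral_const_mul]
    congr 1; ext x; rw [hk_eq t ht]
  rw [this, integral_gaussian]
  have : Real.pi / (1/(2*t)) = 2 * Real.pi * t := by field_simp
  rw [this]
  rw [one_div, inv_mul_cancel₀]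
  exact (Real.sqrt_ne_zero').2 (by positivity)

lemma hk_conv {a b : ℝ} (ha : 0 < a) (hb : 0 < b) (p q : ℝ) :
    ∫ z : ℝ, heatKernel a (z - p) * heatKernel b (z - q) = heatKernel (a + b) (p - q) := by
  have hab : (0:ℝ) < a + b := by linarith
  set β : ℝ := (a+b)/(2*a*b) with hβ
  have hβpos : 0 < β := by positivity
  set m : ℝ := (b*p + a*q)/(a+b) with hm
  have key : ∀ z : ℝ, heatKernel a (z - p) * heatKernel b (z - q)
      = ((1/Real.sqrt (2*Real.pi*a)) * (1/Real.sqrt (2*Real.pi*b))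
          * Real.exp (-(p-q)^2/(2*(a+b)))) * Real.exp (-β * (z - m)^2) := by
    intro z
    have hexp : -(z-p)^2/(2*a) + -(z-q)^2/(2*b)
        = -(p-q)^2/(2*(a+b)) + -β*(z-m)^2 := by
      rw [hβ, hm]; field_simp; ring
    unfold heatKernel
    rw [mul_mul_mul_comm, ← Real.exp_add, hexp, Real.exp_add]
    ring
  simp only [key]
  rw [integral_const_mul]
  have hshift : ∫ z : ℝ, Real.exp (-β * (z - m)^2) = Real.sqrt (Real.pi / β) := by
    rw [integral_sub_right_eq_self (μ := volume) (fun z => Real.exp (-β * z^2)) m]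
    exact integral_gaussian β
  rw [hshift]
  unfold heatKernel
  rw [mul_comm _ (Real.exp _), mul_comm _ (Real.exp _), mul_assoc]
  congr 1
  have e1 : (1:ℝ)/Real.sqrt (2*Real.pi*a) = Real.sqrt (2*Real.pi*a)⁻¹ := by
    rw [Real.sqrt_inv]; ring
  have e2 : (1:ℝ)/Real.sqrt (2*Real.pi*b) = Real.sqrt (2*Real.pi*b)⁻¹ := by
    rw [Real.sqrt_inv]; ring
  have e3 : (1:ℝ)/Real.sqrt (2*Real.pi*(a+b)) = Real.sqrt (2*Real.pi*(a+b))⁻¹ := by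
    rw [Real.sqrt_inv]; ring
  rw [e1, e2, e3, ← Real.sqrt_mul (by positivity), ← Real.sqrt_mul (by positivity)]
  congr 1
  rw [hβ]
  field_simp

lemma hk_continuous (t : ℝ) : Continuous (heatKernel t) := by
  unfold heatKernel
  fun_prop

lemma hk_le {t : ℝ} (ht : 0 < t) (w : ℝ) :
    heatKernel t w ≤ 1 / Real.sqrt (2 * Real.pi * t) := by
  unfold heatKernel
  have h1 : Real.exp (-w ^ 2 / (2 * t)) ≤ 1 := by
    rw [Real.exp_le_one_iff, neg_div]
    have : (0:ℝ) ≤ w ^ 2 / (2 * t) := by positivity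
    linarith
  have h2 : (0:ℝ) ≤ 1 / Real.sqrt (2 * Real.pi * t) := by positivity
  calc 1 / Real.sqrt (2 * Real.pi * t) * Real.exp (-w ^ 2 / (2 * t))
      ≤ 1 / Real.sqrt (2 * Real.pi * t) * 1 := by
        exact mul_le_mul_of_nonneg_left h1 h2
    _ = 1 / Real.sqrt (2 * Real.pi * t) := mul_one _

lemma hk_shift_mass {a : ℝ} (ha : 0 < a) (q : ℝ) :
    (∫ z : ℝ, heatKernel a (z - q)) = 1 := by
  rw [integral_sub_right_eq_self (μ := volume) (heatKernel a) q]
  exact hk_integral ha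

section
variable (y x : ℝ)

lemma kprod_int {a : ℝ} (ha : 0 < a) :
    Integrable (fun p : ℝ × ℝ => heatKernel a (p.2 - p.1))
      ((volume.restrict (Set.Icc y x)).prod volume) := by
  have hm : AEStronglyMeasurable (fun p : ℝ × ℝ => heatKernel a (p.2 - p.1))
      ((volume.restrict (Set.Icc y x)).prod volume) :=
    ((hk_continuous a).comp (continuous_snd.sub continuous_fst)).aestronglyMeasurable
  rw [integrable_prod_iff hm]
  constructor
  · filter_upwards with q
    exact ((hk_integrable ha).comp_sub_right q)
  · have hmass : ∀ q : ℝ, (∫ z : ℝ, ‖heatKernel a (z - q)‖) = 1 := by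
      intro q
      rw [← hk_shift_mass ha q]
      congr 1; ext z; exact Real.norm_of_nonneg (hk_nonneg _ _)
    simp only [hmass]
    exact integrableOn_const measure_Icc_lt_top.ne
end

noncomputable def gP (y x a : ℝ) (z : ℝ) : ℝ := ∫ q in Set.Icc y x, heatKernel a (z - q)

section
variable (y x : ℝ)

lemma gP_cont {a : ℝ} (ha : 0 < a) : Continuous (gP y x a) := by
  apply continuous_of_dominated (bound := fun _ => 1 / Real.sqrt (2 * Real.pi * a))
  · intro z
    exact ((hk_continuous a).comp (continuous_const.sub continuous_id)).aestronglyMeasurable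
  · intro z
    filter_upwards with q
    rw [Real.norm_of_nonneg (hk_nonneg _ _)]
    exact hk_le ha _
  · exact integrableOn_const measure_Icc_lt_top.ne
  · filter_upwards with q
    exact (hk_continuous a).comp (continuous_id.sub continuous_const)

lemma gP_nonneg (a z : ℝ) : 0 ≤ gP y x a z :=
  setIntegral_nonneg measurableSet_Icc fun q _ => hk_nonneg _ _

lemma gP_le_one {a : ℝ} (ha : 0 < a) (z : ℝ) : gP y x a z ≤ 1 := by
  calc gP y x a z ≤ ∫ q : ℝ, heatKernel a (z - q) :=
        setIntegral_le_integral ((hk_integrable ha).comp_sub_left z)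
          (Filter.Eventually.of_forall fun q => hk_nonneg _ _)
    _ = 1 := by
        rw [integral_sub_left_eq_self (μ := volume) (heatKernel a) z]
        exact hk_integral ha

lemma heatP_eq_s15 {a : ℝ} (ha : 0 < a) (z : ℝ) :
    heatP a (Set.indicator (Set.Icc y x) 1) z = gP y x a z := by
  unfold heatP
  rw [if_neg ha.ne']
  have h : ∀ q : ℝ, heatKernel a (z - q) * (Set.indicator (Set.Icc y x) 1 q)
      = Set.indicator (Set.Icc y x) (fun q => heatKernel a (z - q)) q := by
    intro q
    by_cases hq : q ∈ Set.Icc y x <;> simp [hq]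
  simp only [h]
  rw [integral_indicator measurableSet_Icc]
  rfl

lemma gP_integrable {a : ℝ} (ha : 0 < a) : Integrable (gP y x a) := by
  have := (kprod_int y x ha).integral_prod_right
  exact this

end

noncomputable def RR (y x c : ℝ) : ℝ :=
  ∫ p in Set.Icc y x, ∫ q in Set.Icc y x, heatKernel c (p - q)

section
variable (y x : ℝ)

lemma kprod_int_swap {a : ℝ} (ha : 0 < a) :
    Integrable (fun p : ℝ × ℝ => heatKernel a (p.1 - p.2))
      (volume.prod (volume.restrict (Set.Icc y x))) := by
  have := (kprod_int y x ha).swap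
  exact this

lemma cross_inner {a b : ℝ} (ha : 0 < a) (hb : 0 < b) (p : ℝ) :
    ∫ z : ℝ, heatKernel a (z - p) * gP y x b z
      = ∫ q in Set.Icc y x, heatKernel (a + b) (p - q) := by
  have h1 : ∀ z : ℝ, heatKernel a (z - p) * gP y x b z
      = ∫ q in Set.Icc y x, heatKernel a (z - p) * heatKernel b (z - q) := by
    intro z
    rw [integral_const_mul]
    rfl
  simp only [h1]
  rw [integral_integral_swap]
  · refine setIntegral_congr_fun measurableSet_Icc fun q _ => ?_
    exact hk_conv ha hb p q
  · -- integrability of uncurry on volume.prod (restrict I)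
    refine Integrable.mono' (((kprod_int_swap y x hb).const_mul
        (1 / Real.sqrt (2 * Real.pi * a)))) ?_ ?_
    · exact (((hk_continuous a).comp ((continuous_fst.sub continuous_const))).mul
        ((hk_continuous b).comp (continuous_fst.sub continuous_snd))).aestronglyMeasurable
    · filter_upwards with zq
      rw [Function.uncurry]
      rw [Real.norm_of_nonneg (mul_nonneg (hk_nonneg _ _) (hk_nonneg _ _))]
      exact mul_le_mul_of_nonneg_right (hk_le ha _) (hk_nonneg _ _)

lemma cross {a b : ℝ} (ha : 0 < a) (hb : 0 < b) :
    ∫ z : ℝ, gP y x a z * gP y x b z = RR y x (a + b) := by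
  have h1 : ∀ z : ℝ, gP y x a z * gP y x b z
      = ∫ p in Set.Icc y x, heatKernel a (z - p) * gP y x b z := by
    intro z
    rw [integral_mul_const]
    rfl
  simp only [h1]
  rw [integral_integral_swap]
  · refine setIntegral_congr_fun measurableSet_Icc fun p _ => ?_
    exact cross_inner y x ha hb p
  · refine Integrable.mono' (kprod_int_swap y x ha) ?_ ?_
    · exact (((hk_continuous a).comp ((continuous_fst.sub continuous_snd))).mul
        ((gP_cont y x hb).comp continuous_fst)).aestronglyMeasurable
    · filter_upwards with zp
      rw [Function.uncurry]
      rw [Real.norm_of_nonneg (mul_nonneg (hk_nonneg _ _) (gP_nonneg _ _ _ _))]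
      calc heatKernel a (zp.1 - zp.2) * gP y x b zp.1
          ≤ heatKernel a (zp.1 - zp.2) * 1 :=
            mul_le_mul_of_nonneg_left (gP_le_one y x hb _) (hk_nonneg _ _)
        _ = heatKernel a (zp.1 - zp.2) := mul_one _

end

noncomputable def QQ (y x c : ℝ) : ℝ :=
  ∫ z : ℝ, max (x - y - Real.sqrt c * |z|) 0 * heatKernel 1 z

section
variable (y x : ℝ)

lemma toReal_ofReal_max (a : ℝ) : (ENNReal.ofReal a).toReal = max a 0 := by
  rcases le_total a 0 with h | h
  · rw [ENNReal.ofReal_of_nonpos h, max_eq_right h]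
    rfl
  · rw [ENNReal.toReal_ofReal h, max_eq_left h]

lemma ind_overlap (hyx : y ≤ x) (w : ℝ) :
    (∫ p in Set.Icc y x, Set.indicator (Set.Icc y x) (1 : ℝ → ℝ) (p - w))
      = max (x - y - |w|) 0 := by
  have h1 : ∀ p : ℝ, Set.indicator (Set.Icc y x) (1 : ℝ → ℝ) (p - w)
      = Set.indicator (Set.Icc (y + w) (x + w)) (1 : ℝ → ℝ) p := by
    intro p
    simp only [Set.indicator_apply, Set.mem_Icc, Pi.one_apply]
    refine if_congr ?_ rfl rfl
    constructor <;> intro h <;> exact ⟨by linarith [h.1], by linarith [h.2]⟩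
  simp only [h1]
  rw [setIntegral_indicator measurableSet_Icc]
  have h2 : (∫ p in Set.Icc y x ∩ Set.Icc (y + w) (x + w), (1 : ℝ → ℝ) p)
      = (volume (Set.Icc y x ∩ Set.Icc (y + w) (x + w))).toReal := by
    simp [setIntegral_const]
    rfl
  rw [h2, Set.Icc_inter_Icc, Real.volume_Icc, toReal_ofReal_max]
  rcases le_total 0 w with hw | hw
  · rw [sup_eq_right.2 (by linarith : y ≤ y + w), inf_eq_left.2 (by linarith : x ≤ x + w),
      abs_of_nonneg hw]
    congr 1
    ring
  · rw [sup_eq_left.2 (by linarith : y + w ≤ y), inf_eq_right.2 (by linarith : x + w ≤ x),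
      abs_of_nonpos hw]
    congr 1
    ring
end

section
variable (y x : ℝ)

lemma RR_eq_tent {c : ℝ} (hc : 0 < c) (hyx : y ≤ x) :
    RR y x c = ∫ w : ℝ, max (x - y - |w|) 0 * heatKernel c w := by
  have hstep : ∀ p : ℝ, (∫ q in Set.Icc y x, heatKernel c (p - q))
      = ∫ w : ℝ, Set.indicator (Set.Icc y x) (1 : ℝ → ℝ) (p - w) * heatKernel c w := by
    intro p
    have e1 : (∫ q in Set.Icc y x, heatKernel c (p - q))
        = ∫ q : ℝ, Set.indicator (Set.Icc y x) (1 : ℝ → ℝ) q * heatKernel c (p - q) := by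
      rw [← integral_indicator measurableSet_Icc]
      congr 1
      ext q
      by_cases hq : q ∈ Set.Icc y x <;> simp [hq]
    rw [e1, ← integral_sub_left_eq_self
      (fun q => Set.indicator (Set.Icc y x) (1 : ℝ → ℝ) q * heatKernel c (p - q)) volume p]
    congr 1
    ext w
    simp only [sub_sub_cancel]
  unfold RR
  simp only [hstep]
  rw [integral_integral_swap]
  · congr 1
    ext w
    rw [integral_mul_const, ind_overlap y x hyx w]
  · -- integrability on (restrict Icc).prod volume
    have hdom : Integrable (fun pw : ℝ × ℝ => heatKernel c pw.2)
        ((volume.restrict (Set.Icc y x)).prod volume) := by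
      have hm2 : AEStronglyMeasurable (fun pw : ℝ × ℝ => heatKernel c pw.2)
          ((volume.restrict (Set.Icc y x)).prod volume) :=
        ((hk_continuous c).comp continuous_snd).aestronglyMeasurable
      rw [integrable_prod_iff hm2]
      constructor
      · filter_upwards with p
        exact hk_integrable hc
      · have : ∀ p : ℝ, (∫ w : ℝ, ‖heatKernel c w‖) = 1 := by
          intro p
          rw [← hk_integral hc]
          congr 1; ext w; exact Real.norm_of_nonneg (hk_nonneg _ _)
        simp only [this]
        exact integrableOn_const measure_Icc_lt_top.ne
    refine Integrable.mono' hdom ?_ ?_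
    · have hind : Measurable (Set.indicator (Set.Icc y x) (1 : ℝ → ℝ)) :=
        measurable_one.indicator measurableSet_Icc
      exact ((hind.comp (measurable_fst.sub measurable_snd)).mul
        ((hk_continuous c).measurable.comp measurable_snd)).aestronglyMeasurable
    · filter_upwards with pw
      rw [Function.uncurry]
      have h0 : (0:ℝ) ≤ Set.indicator (Set.Icc y x) (1 : ℝ → ℝ) (pw.1 - pw.2) :=
        Set.indicator_nonneg (fun _ _ => zero_le_one) _
      have h1 : Set.indicator (Set.Icc y x) (1 : ℝ → ℝ) (pw.1 - pw.2) ≤ 1 :=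
        Set.indicator_le_self' (fun _ _ => zero_le_one) _ |>.trans (le_refl _) |>.trans (by
          by_cases hq : pw.1 - pw.2 ∈ Set.Icc y x <;> simp [hq])
      rw [Real.norm_of_nonneg (mul_nonneg h0 (hk_nonneg _ _))]
      calc Set.indicator (Set.Icc y x) (1 : ℝ → ℝ) (pw.1 - pw.2) * heatKernel c pw.2
          ≤ 1 * heatKernel c pw.2 := mul_le_mul_of_nonneg_right h1 (hk_nonneg _ _)
        _ = heatKernel c pw.2 := one_mul _
end

section
variable (y x : ℝ)

lemma tent_eq_QQ {c : ℝ} (hc : 0 < c) :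
    (∫ w : ℝ, max (x - y - |w|) 0 * heatKernel c w) = QQ y x c := by
  have hsc : 0 < Real.sqrt c := Real.sqrt_pos.2 hc
  have key := MeasureTheory.Measure.integral_comp_mul_left
    (fun w => max (x - y - |w|) 0 * heatKernel c w) (Real.sqrt c)
  rw [abs_of_nonneg (inv_nonneg.2 hsc.le), smul_eq_mul] at key
  have h2 : (∫ w : ℝ, max (x - y - |w|) 0 * heatKernel c w)
      = Real.sqrt c * ∫ z : ℝ, max (x - y - |Real.sqrt c * z|) 0
          * heatKernel c (Real.sqrt c * z) := by
    rw [key]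
    field_simp
  rw [h2, ← integral_const_mul]
  unfold QQ
  congr 1
  ext z
  have e1 : |Real.sqrt c * z| = Real.sqrt c * |z| := by
    rw [abs_mul, abs_of_nonneg hsc.le]
  have e2 : heatKernel c (Real.sqrt c * z) = (1 / Real.sqrt (2 * Real.pi * c))
      * Real.exp (-z ^ 2 / 2) := by
    unfold heatKernel
    congr 1
    rw [mul_pow, Real.sq_sqrt hc.le]
    congr 1
    field_simp
  have e3 : heatKernel 1 z = (1 / Real.sqrt (2 * Real.pi)) * Real.exp (-z ^ 2 / 2) := by
    unfold heatKernel
    norm_num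
  rw [e1, e2, e3]
  have e4 : Real.sqrt (2 * Real.pi * c) = Real.sqrt (2 * Real.pi) * Real.sqrt c :=
    Real.sqrt_mul (by positivity) c
  rw [e4]
  have h5 : Real.sqrt (2 * Real.pi) ≠ 0 := by positivity
  field_simp

end

section
variable (y x : ℝ)

lemma QQ_int (hyx : y ≤ x) (c : ℝ) :
    Integrable (fun z : ℝ => max (x - y - Real.sqrt c * |z|) 0 * heatKernel 1 z) := by
  refine Integrable.mono' ((hk_integrable one_pos).const_mul (x - y)) ?_ ?_
  · exact ((((continuous_const.sub (continuous_const.mul continuous_abs)).max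
      continuous_const)).mul (hk_continuous 1)).aestronglyMeasurable
  · filter_upwards with z
    rw [Real.norm_of_nonneg (mul_nonneg (le_max_right _ _) (hk_nonneg _ _))]
    refine mul_le_mul_of_nonneg_right ?_ (hk_nonneg _ _)
    refine max_le ?_ (by linarith)
    have : 0 ≤ Real.sqrt c * |z| := mul_nonneg (Real.sqrt_nonneg c) (abs_nonneg z)
    linarith

lemma QQ_nonneg (c : ℝ) : 0 ≤ QQ y x c :=
  integral_nonneg fun z => mul_nonneg (le_max_right _ _) (hk_nonneg _ _)

lemma QQ_le (hyx : y ≤ x) (c : ℝ) : QQ y x c ≤ x - y := by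
  have h1 : QQ y x c ≤ ∫ z : ℝ, (x - y) * heatKernel 1 z := by
    refine integral_mono (QQ_int y x hyx c) ((hk_integrable one_pos).const_mul (x - y)) ?_
    intro z
    refine mul_le_mul_of_nonneg_right ?_ (hk_nonneg _ _)
    refine max_le ?_ (by linarith)
    have : 0 ≤ Real.sqrt c * |z| := mul_nonneg (Real.sqrt_nonneg c) (abs_nonneg z)
    linarith
  rw [integral_const_mul, hk_integral one_pos, mul_one] at h1
  exact h1

lemma QQ_anti (hyx : y ≤ x) : Antitone (QQ y x) := by
  intro c c' h
  refine integral_mono (QQ_int y x hyx c') (QQ_int y x hyx c) ?_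
  intro z
  refine mul_le_mul_of_nonneg_right (max_le_max ?_ le_rfl) (hk_nonneg _ _)
  have := Real.sqrt_le_sqrt h
  have h2 : Real.sqrt c * |z| ≤ Real.sqrt c' * |z| :=
    mul_le_mul_of_nonneg_right this (abs_nonneg z)
  linarith

lemma QQ_zero (hyx : y ≤ x) : QQ y x 0 = x - y := by
  unfold QQ
  have h1 : ∀ z : ℝ, max (x - y - Real.sqrt 0 * |z|) 0 * heatKernel 1 z
      = (x - y) * heatKernel 1 z := by
    intro z
    rw [Real.sqrt_zero, zero_mul, sub_zero, max_eq_left (by linarith)]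
  simp only [h1]
  rw [integral_const_mul, hk_integral one_pos, mul_one]

lemma RR_eq_QQ {c : ℝ} (hc : 0 < c) (hyx : y ≤ x) : RR y x c = QQ y x c :=
  (RR_eq_tent y x hc hyx).trans (tent_eq_QQ y x hc)

lemma cross0 {a : ℝ} (ha : 0 < a) :
    ∫ z : ℝ, gP y x a z * Set.indicator (Set.Icc y x) 1 z = RR y x a := by
  have h : ∀ z : ℝ, gP y x a z * Set.indicator (Set.Icc y x) 1 z
      = Set.indicator (Set.Icc y x) (gP y x a) z := by
    intro z
    by_cases hz : z ∈ Set.Icc y x <;> simp [hz]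
  simp only [h]
  rw [integral_indicator measurableSet_Icc]
  rfl

lemma ind_int : Integrable (Set.indicator (Set.Icc y x) (1 : ℝ → ℝ)) :=
  (integrable_indicator_iff measurableSet_Icc).2
    (integrableOn_const measure_Icc_lt_top.ne)

lemma ind_sq_integral (hyx : y ≤ x) :
    ∫ z : ℝ, Set.indicator (Set.Icc y x) (1 : ℝ → ℝ) z
      * Set.indicator (Set.Icc y x) (1 : ℝ → ℝ) z = x - y := by
  have h : ∀ z : ℝ, Set.indicator (Set.Icc y x) (1 : ℝ → ℝ) z
      * Set.indicator (Set.Icc y x) (1 : ℝ → ℝ) z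
      = Set.indicator (Set.Icc y x) (1 : ℝ → ℝ) z := by
    intro z
    by_cases hz : z ∈ Set.Icc y x <;> simp [hz]
  simp only [h]
  rw [MeasureTheory.integral_indicator_one measurableSet_Icc, Real.volume_real_Icc_of_le hyx]

lemma int_gg {a b : ℝ} (ha : 0 < a) (hb : 0 < b) :
    Integrable (fun z : ℝ => gP y x a z * gP y x b z) := by
  refine Integrable.mono' (gP_integrable y x ha) ?_ ?_
  · exact ((gP_cont y x ha).mul (gP_cont y x hb)).aestronglyMeasurable
  · filter_upwards with z
    rw [Real.norm_of_nonneg (mul_nonneg (gP_nonneg _ _ _ _) (gP_nonneg _ _ _ _))]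
    calc gP y x a z * gP y x b z ≤ gP y x a z * 1 :=
          mul_le_mul_of_nonneg_left (gP_le_one y x hb z) (gP_nonneg _ _ _ _)
      _ = gP y x a z := mul_one _

lemma int_gf {a : ℝ} (ha : 0 < a) :
    Integrable (fun z : ℝ => gP y x a z * Set.indicator (Set.Icc y x) 1 z) := by
  refine Integrable.mono' (ind_int y x) ?_ ?_
  · exact ((gP_cont y x ha).aestronglyMeasurable.mul
      ((measurable_one.indicator measurableSet_Icc).aestronglyMeasurable))
  · filter_upwards with z
    have h0 : (0:ℝ) ≤ Set.indicator (Set.Icc y x) 1 z :=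
      Set.indicator_nonneg (fun _ _ => zero_le_one) _
    rw [Real.norm_of_nonneg (mul_nonneg (gP_nonneg _ _ _ _) h0)]
    calc gP y x a z * Set.indicator (Set.Icc y x) 1 z
        ≤ 1 * Set.indicator (Set.Icc y x) 1 z :=
          mul_le_mul_of_nonneg_right (gP_le_one y x ha z) h0
      _ = _ := one_mul _

lemma int_ff :
    Integrable (fun z : ℝ => Set.indicator (Set.Icc y x) (1:ℝ→ℝ) z
      * Set.indicator (Set.Icc y x) (1:ℝ→ℝ) z) := by
  refine (ind_int y x).congr ?_
  filter_upwards with z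
  by_cases hz : z ∈ Set.Icc y x <;> simp [hz]

end

lemma expand_sq {A B : ℝ → ℝ} (hAA : Integrable (fun z => A z * A z))
    (hAB : Integrable (fun z => A z * B z)) (hBB : Integrable (fun z => B z * B z)) :
    ∫ z : ℝ, (A z - B z) ^ 2
      = (∫ z : ℝ, A z * A z) - 2 * (∫ z : ℝ, A z * B z) + ∫ z : ℝ, B z * B z := by
  have h : ∀ z : ℝ, (A z - B z) ^ 2 = A z * A z - 2 * (A z * B z) + B z * B z := by
    intro z; ring
  simp only [h]
  have h1 : Integrable (fun z : ℝ => A z * A z - 2 * (A z * B z)) := by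
    exact hAA.sub (hAB.const_mul 2)
  have h2 : Integrable (fun z : ℝ => 2 * (A z * B z)) := by
    exact hAB.const_mul 2
  rw [integral_add h1 hBB, integral_sub hAA h2, integral_const_mul]

lemma heatP_zero (f : ℝ → ℝ) (z : ℝ) : heatP 0 f z = f z := if_pos rfl

lemma inner_eq (y x : ℝ) (hyx : y ≤ x) {u r : ℝ} (hu : 0 < u) (hr : 0 ≤ r) :
    (∫ z : ℝ, (heatP (u + r) (Set.indicator (Set.Icc y x) 1) z
        - heatP r (Set.indicator (Set.Icc y x) 1) z) ^ 2)
      = QQ y x (2*u + 2*r) - 2 * QQ y x (u + 2*r) + QQ y x (2*r) := by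
  rcases hr.eq_or_lt with h0 | hrpos
  · subst h0
    have hur : 0 < u + 0 := by linarith
    simp only [heatP_eq_s15 y x hur, heatP_zero]
    rw [expand_sq (int_gg y x hur hur) (int_gf y x hur) (int_ff y x)]
    rw [cross y x hur hur, cross0 y x hur, ind_sq_integral y x hyx]
    rw [RR_eq_QQ y x (by linarith) hyx, RR_eq_QQ y x hur hyx, ← QQ_zero y x hyx]
    norm_num [two_mul]
  · have hur : 0 < u + r := by linarith
    simp only [heatP_eq_s15 y x hur, heatP_eq_s15 y x hrpos]
    rw [expand_sq (int_gg y x hur hur) (int_gg y x hur hrpos) (int_gg y x hrpos hrpos)]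
    rw [cross y x hur hur, cross y x hur hrpos, cross y x hrpos hrpos]
    rw [RR_eq_QQ y x (by linarith) hyx, RR_eq_QQ y x (by linarith) hyx,
      RR_eq_QQ y x (by linarith) hyx]
    ring_nf

theorem stmt15 (y x s t : ℝ) (hyx : y ≤ x) (hs : 0 ≤ s) (hst : s ≤ t)
    (hxy : x - y ≤ Real.sqrt (t - s)) :
    (∫ r in (0:ℝ)..s, ∫ z : ℝ,
        (heatP (t - s + r) (Set.indicator (Set.Icc y x) 1) z
          - heatP r (Set.indicator (Set.Icc y x) 1) z) ^ 2)
      ≤ (1 / 2) * (t - s) * (x - y) := by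
  have hL : 0 ≤ x - y := by linarith
  by_cases hu0 : t - s = 0
  · have hcongr : Set.EqOn
        (fun r => ∫ z : ℝ, (heatP (t - s + r) (Set.indicator (Set.Icc y x) 1) z
          - heatP r (Set.indicator (Set.Icc y x) 1) z) ^ 2)
        (fun _ => (0:ℝ)) (Set.uIcc 0 s) := by
      intro r _
      simp only [hu0, zero_add, sub_self]
      simp
    rw [intervalIntegral.integral_congr hcongr, hu0]
    simp
  · have hu : 0 < t - s := lt_of_le_of_ne (by linarith) (Ne.symm hu0)
    set u := t - s with hudef
    clear_value u
    have hanti : Antitone (QQ y x) := QQ_anti y x hyx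
    have hQi : ∀ a b : ℝ, IntervalIntegrable (QQ y x) volume a b :=
      fun a b => hanti.intervalIntegrable
    have hcongr : Set.EqOn
        (fun r => ∫ z : ℝ, (heatP (u + r) (Set.indicator (Set.Icc y x) 1) z
          - heatP r (Set.indicator (Set.Icc y x) 1) z) ^ 2)
        (fun r => QQ y x (2*u + 2*r) - 2 * QQ y x (u + 2*r) + QQ y x (2*r))
        (Set.uIcc 0 s) := by
      intro r hrmem
      rw [Set.uIcc_of_le hs] at hrmem
      exact inner_eq y x hyx hu hrmem.1
    rw [intervalIntegral.integral_congr hcongr]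
    -- interval integrability of the pieces
    have i1 : IntervalIntegrable (fun r => QQ y x (2*u + 2*r)) volume 0 s :=
      Antitone.intervalIntegrable (fun r r' h => hanti (by linarith))
    have i2 : IntervalIntegrable (fun r => QQ y x (u + 2*r)) volume 0 s :=
      Antitone.intervalIntegrable (fun r r' h => hanti (by linarith))
    have i3 : IntervalIntegrable (fun r => QQ y x (2*r)) volume 0 s :=
      Antitone.intervalIntegrable (fun r r' h => hanti (by linarith))
    have i2' : IntervalIntegrable (fun r => 2 * QQ y x (u + 2*r)) volume 0 s :=
      i2.const_mul 2
    have i12 : IntervalIntegrable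
        (fun r => QQ y x (2*u + 2*r) - 2 * QQ y x (u + 2*r)) volume 0 s := by
      exact i1.sub i2'
    rw [intervalIntegral.integral_add i12 i3, intervalIntegral.integral_sub i1 i2',
      intervalIntegral.integral_const_mul]
    -- substitution: each piece as integral of QQ
    have e1 : (∫ r in (0:ℝ)..s, QQ y x (2*u + 2*r))
        = 2⁻¹ * ∫ c in (2*u)..(2*u + 2*s), QQ y x c := by
      have h : (fun r => QQ y x (2*u + 2*r)) = fun r => QQ y x (2*r + 2*u) := by
        funext r; congr 1; ring
      rw [h, intervalIntegral.integral_comp_mul_add (QQ y x) two_ne_zero (2*u)]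
      norm_num [smul_eq_mul]
      rw [show 2*s + 2*u = 2*u + 2*s by ring]
    have e2 : (∫ r in (0:ℝ)..s, QQ y x (u + 2*r))
        = 2⁻¹ * ∫ c in u..(u + 2*s), QQ y x c := by
      have h : (fun r => QQ y x (u + 2*r)) = fun r => QQ y x (2*r + u) := by
        funext r; congr 1; ring
      rw [h, intervalIntegral.integral_comp_mul_add (QQ y x) two_ne_zero u]
      norm_num [smul_eq_mul]
      rw [show 2*s + u = u + 2*s by ring]
    have e3 : (∫ r in (0:ℝ)..s, QQ y x (2*r))
        = 2⁻¹ * ∫ c in (0:ℝ)..(2*s), QQ y x c := by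
      have h : (fun r => QQ y x (2*r)) = fun r => QQ y x (2*r + 0) := by
        funext r; congr 1; ring
      rw [h, intervalIntegral.integral_comp_mul_add (QQ y x) two_ne_zero 0]
      norm_num [smul_eq_mul]
    rw [e1, e2, e3]
    -- key comparisons
    have hA : (∫ c in (2*u)..(2*u + 2*s), QQ y x c) ≤ ∫ c in u..(u + 2*s), QQ y x c := by
      have hshift := intervalIntegral.integral_comp_add_right (QQ y x) u (a := u) (b := u + 2*s)
      have hb1 : u + u = 2*u := by ring
      have hb2 : u + 2*s + u = 2*u + 2*s := by ring
      rw [hb1, hb2] at hshift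
      rw [← hshift]
      refine intervalIntegral.integral_mono_on (by linarith) ?_ (hQi _ _) ?_
      · exact Antitone.intervalIntegrable (fun r r' h => hanti (by linarith))
      · intro c _
        exact hanti (by linarith)
    have hsplit1 : (∫ c in (0:ℝ)..(2*s), QQ y x c) + ∫ c in (2*s)..(2*s + u), QQ y x c
        = ∫ c in (0:ℝ)..(2*s + u), QQ y x c :=
      intervalIntegral.integral_add_adjacent_intervals (hQi _ _) (hQi _ _)
    have hsplit2 : (∫ c in (0:ℝ)..u, QQ y x c) + ∫ c in u..(u + 2*s), QQ y x c
        = ∫ c in (0:ℝ)..(u + 2*s), QQ y x c :=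
      intervalIntegral.integral_add_adjacent_intervals (hQi _ _) (hQi _ _)
    have hbeq : (∫ c in (0:ℝ)..(2*s + u), QQ y x c) = ∫ c in (0:ℝ)..(u + 2*s), QQ y x c := by
      rw [show 2*s + u = u + 2*s by ring]
    have hpos : 0 ≤ ∫ c in (2*s)..(2*s + u), QQ y x c :=
      intervalIntegral.integral_nonneg (by linarith) (fun c _ => QQ_nonneg y x c)
    have hfirst : (∫ c in (0:ℝ)..u, QQ y x c) ≤ u * (x - y) := by
      calc (∫ c in (0:ℝ)..u, QQ y x c) ≤ ∫ _ in (0:ℝ)..u, (x - y) :=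
            intervalIntegral.integral_mono_on hu.le (hQi _ _) intervalIntegrable_const
              (fun c _ => QQ_le y x hyx c)
        _ = u * (x - y) := by
            rw [intervalIntegral.integral_const, smul_eq_mul, sub_zero]
    have hmain : (2⁻¹ * ∫ (c : ℝ) in 2*u..2*u + 2*s, QQ y x c)
        - 2 * (2⁻¹ * ∫ (c : ℝ) in u..u + 2*s, QQ y x c)
        + 2⁻¹ * ∫ (c : ℝ) in (0:ℝ)..2*s, QQ y x c ≤ 2⁻¹ * (u * (x - y)) := by
      linarith
    calc (2⁻¹ * ∫ (c : ℝ) in 2*u..2*u + 2*s, QQ y x c)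
        - 2 * (2⁻¹ * ∫ (c : ℝ) in u..u + 2*s, QQ y x c)
        + 2⁻¹ * ∫ (c : ℝ) in (0:ℝ)..2*s, QQ y x c ≤ 2⁻¹ * (u * (x - y)) := hmain
      _ = 1 / 2 * u * (x - y) := by ring
end
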